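/- Let h ≥ 1, q₀ = 2^h, q = 2^{2h+1}. For the additive polynomial R(x) = x^{2q₀} + x^{q₀} over 𝔽₂, the kernel polynomial R̃(x) = x^{2q} + x^q + x² + x factors as (x^q + x) ∘ (x² + x), its roots form an 𝔽₂-vector space of dimension 2h+2 contained in 𝔽_{q²}, and its splitting field over 𝔽₂ is 𝔽_{q²} (i.e., the roots generate 𝔽_{q²} as they span the 𝔽₂-subspace of 𝔽_{q²} generated by 𝔽_q ∪ 𝔽₄). -/

import Mathlib

open Polynomial

private lemma pow_two_pow_gcd' {M : Type*} [Monoid M] (x : M) :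
    ∀ k, ∀ n, x ^ (2 ^ k) = x → x ^ (2 ^ n) = x → x ^ (2 ^ Nat.gcd k n) = x := by
  intro k
  induction k using Nat.strong_induction_on with
  | _ k ih =>
    intro n hk hn
    rcases Nat.eq_zero_or_pos k with hk0 | hk0
    · subst hk0; simpa using hn
    · rw [Nat.gcd_rec]
      refine ih _ (Nat.mod_lt n hk0) _ ?_ hk
      have ht : ∀ t, x ^ (2 ^ (k * t)) = x := by
        intro t
        induction t with
        | zero => simp
        | succ t iht => rw [Nat.mul_succ, pow_add, pow_mul, iht, hk]
      calc x ^ 2 ^ (n % k) = (x ^ 2 ^ (k * (n / k))) ^ 2 ^ (n % k) := by rw [ht]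
        _ = x ^ (2 ^ (k * (n / k)) * 2 ^ (n % k)) := (pow_mul x _ _).symm
        _ = x ^ 2 ^ (k * (n / k) + n % k) := by rw [pow_add]
        _ = x ^ 2 ^ n := by rw [Nat.div_add_mod]
        _ = x := hn

theorem suzuki_kernel_polynomial (h : ℕ) (hh : 1 ≤ h)
    (Rtilde : GaloisField 2 (2 * (2 * h + 1)) → GaloisField 2 (2 * (2 * h + 1)))
    (hRt : ∀ x, Rtilde x = x ^ (2 ^ (2 * h + 2)) + x ^ (2 ^ (2 * h + 1)) + x ^ 2 + x) :
    (∀ t, Rtilde t = (t ^ 2 + t) ^ (2 ^ (2 * h + 1)) + (t ^ 2 + t)) ∧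
    (∀ x y, Rtilde x = 0 → Rtilde y = 0 → Rtilde (x + y) = 0) ∧
    Nat.card {x : GaloisField 2 (2 * (2 * h + 1)) | Rtilde x = 0} = 2 ^ (2 * h + 2) ∧
    (∀ k : ℕ, 0 < k →
      ((∀ x, Rtilde x = 0 → x ^ (2 ^ k) = x) ↔ 2 * (2 * h + 1) ∣ k)) := by
  classical
  haveI : Fintype (GaloisField 2 (2 * (2 * h + 1))) := Fintype.ofFinite _
  have hn0 : 2 * (2 * h + 1) ≠ 0 := by omega
  have hcard : Fintype.card (GaloisField 2 (2 * (2 * h + 1))) = 2 ^ (2 * (2 * h + 1)) := by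
    rw [← Nat.card_eq_fintype_card]; exact GaloisField.card 2 _ hn0
  have hq2 : 2 ^ (2 * h + 2) = 2 ^ (2 * h + 1) * 2 := by rw [pow_succ]
  have hqq : 2 ^ (2 * h + 1) * 2 ^ (2 * h + 1) = 2 ^ (2 * (2 * h + 1)) := by
    rw [← pow_add]; ring_nf
  -- Part 1
  have part1 : ∀ t : GaloisField 2 (2 * (2 * h + 1)),
      Rtilde t = (t ^ 2 + t) ^ (2 ^ (2 * h + 1)) + (t ^ 2 + t) := by
    intro t
    rw [hRt, add_pow_char_pow (t ^ 2) t 2 (2 * h + 1)]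
    have e1 : (t ^ 2) ^ 2 ^ (2 * h + 1) = t ^ 2 ^ (2 * h + 2) := by
      rw [← pow_mul, hq2]; ring_nf
    rw [e1]; ring
  -- Part 2
  have addRt : ∀ x y : GaloisField 2 (2 * (2 * h + 1)),
      Rtilde (x + y) = Rtilde x + Rtilde y := by
    intro x y
    rw [hRt, hRt, hRt, add_pow_char_pow x y 2 (2 * h + 2),
      add_pow_char_pow x y 2 (2 * h + 1), add_pow_char x y 2]
    ring
  have part2 : ∀ x y : GaloisField 2 (2 * (2 * h + 1)),
      Rtilde x = 0 → Rtilde y = 0 → Rtilde (x + y) = 0 := by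
    intro x y hx hy; rw [addRt, hx, hy, add_zero]
  -- Polynomial setup
  set P : (GaloisField 2 (2 * (2 * h + 1)))[X] := X ^ 2 ^ (2 * h + 1) + X with hP
  set f : (GaloisField 2 (2 * (2 * h + 1)))[X] := P ^ 2 + P with hf
  have hevalf : ∀ x : GaloisField 2 (2 * (2 * h + 1)), eval x f = Rtilde x := by
    intro x
    have e0 : eval x f = (x ^ 2 ^ (2 * h + 1) + x) ^ 2 + (x ^ 2 ^ (2 * h + 1) + x) := by
      simp [hf, hP]
    rw [e0, hRt, add_pow_char (x ^ 2 ^ (2 * h + 1)) x 2]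
    have e1 : (x ^ 2 ^ (2 * h + 1)) ^ 2 = x ^ 2 ^ (2 * h + 2) := by rw [← pow_mul, hq2]
    rw [e1]; ring
  -- divisibility
  have hdvd : f ∣ X ^ 2 ^ (2 * (2 * h + 1)) - X := by
    have h1 : f = P * (P - 1) := by
      have e : P * (P - 1) = P ^ 2 - P := by ring
      rw [e, CharTwo.sub_eq_add, hf]
    have h2 : P - 1 ∣ P ^ (2 ^ (2 * h + 1) - 1) - 1 := by
      simpa using sub_dvd_pow_sub_pow P 1 (2 ^ (2 * h + 1) - 1)
    have h3 : P * (P ^ (2 ^ (2 * h + 1) - 1) - 1) = P ^ 2 ^ (2 * h + 1) - P := by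
      have hq1 : 2 ^ (2 * h + 1) - 1 + 1 = 2 ^ (2 * h + 1) :=
        Nat.succ_pred_eq_of_pos (pow_pos (by norm_num) _)
      calc P * (P ^ (2 ^ (2 * h + 1) - 1) - 1)
          = P ^ (2 ^ (2 * h + 1) - 1) * P - P := by ring
        _ = P ^ (2 ^ (2 * h + 1) - 1 + 1) - P := by rw [pow_succ P]
        _ = _ := by rw [hq1]
      -- done
    have h4 : P ^ 2 ^ (2 * h + 1) - P = X ^ 2 ^ (2 * (2 * h + 1)) - X := by
      have e2 : P ^ 2 ^ (2 * h + 1)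
          = X ^ 2 ^ (2 * (2 * h + 1)) + X ^ 2 ^ (2 * h + 1) := by
        rw [hP, add_pow_char_pow (X ^ 2 ^ (2 * h + 1) : _) X 2 (2 * h + 1), ← pow_mul, hqq]
      rw [e2, hP]; ring
    rw [← h4, ← h3, h1]
    exact mul_dvd_mul_left P h2
  -- the big polynomial splits with all elements as roots
  have hGne : (X ^ 2 ^ (2 * (2 * h + 1)) - X :
      (GaloisField 2 (2 * (2 * h + 1)))[X]) ≠ 0 :=
    FiniteField.X_pow_card_sub_X_ne_zero _ (Nat.one_lt_two_pow hn0)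
  have hGroots : (X ^ 2 ^ (2 * (2 * h + 1)) - X :
      (GaloisField 2 (2 * (2 * h + 1)))[X]).roots = Finset.univ.val := by
    rw [← hcard]; exact FiniteField.roots_X_pow_card_sub_X _
  have hGsplits : (X ^ 2 ^ (2 * (2 * h + 1)) - X :
      (GaloisField 2 (2 * (2 * h + 1)))[X]).Splits := by
    rw [splits_iff_card_roots, hGroots,
      FiniteField.X_pow_card_sub_X_natDegree_eq _ (Nat.one_lt_two_pow hn0)]
    rw [← Finset.card_def, Finset.card_univ, hcard]
  have hfsplits : f.Splits :=
    hGsplits.of_dvd hGne hdvd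
  have hf0 : f ≠ 0 := by
    intro hzero
    rw [hzero] at hdvd
    exact hGne (zero_dvd_iff.mp hdvd)
  -- separability
  have hderiv : derivative f = 1 := by
    have hq0 : ((2 ^ (2 * h + 1) : ℕ) : GaloisField 2 (2 * (2 * h + 1))) = 0 := by
      rw [Nat.cast_pow, show ((2:ℕ) : GaloisField 2 (2 * (2 * h + 1))) = 0 from
        CharP.cast_eq_zero _ 2]
      exact zero_pow (by omega)
    have hdP : derivative P = 1 := by
      rw [hP, derivative_add, derivative_X_pow, derivative_X, hq0, map_zero, zero_mul, zero_add]
    have h20 : (2 : GaloisField 2 (2 * (2 * h + 1))) = 0 := CharTwo.two_eq_zero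
    rw [hf, derivative_add, derivative_pow, hdP]
    simp [h20]
  have hsep : f.Separable := by
    rw [Polynomial.separable_def, hderiv]; exact isCoprime_one_right
  -- degree
  have hmonicP : P.Monic := by
    apply monic_X_pow_add
    rw [degree_X]
    exact_mod_cast Nat.one_lt_two_pow (by omega : 2 * h + 1 ≠ 0)
  have hndP : P.natDegree = 2 ^ (2 * h + 1) := by
    rw [hP, natDegree_add_eq_left_of_natDegree_lt, natDegree_X_pow]
    rw [natDegree_X_pow, natDegree_X]
    exact Nat.one_lt_two_pow (by omega)
  have hndf : f.natDegree = 2 ^ (2 * h + 2) := by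
    have hP2 : (P ^ 2).natDegree = 2 * 2 ^ (2 * h + 1) := by
      rw [hmonicP.natDegree_pow, hndP]
    rw [hf, natDegree_add_eq_left_of_natDegree_lt, hP2, hq2]; ring
    rw [hP2, hndP]
    have := Nat.pow_pos (n := 2 * h + 1) (by norm_num : 0 < 2)
    omega
  -- root count
  have hcardroots : Multiset.card f.roots = 2 ^ (2 * h + 2) := by
    rw [splits_iff_card_roots.mp hfsplits, hndf]
  have hnodup : f.roots.Nodup := nodup_roots hsep
  have hsetfin : {x : GaloisField 2 (2 * (2 * h + 1)) | Rtilde x = 0}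
      = ↑f.roots.toFinset := by
    ext x
    rw [Set.mem_setOf_eq, Finset.mem_coe, Multiset.mem_toFinset, mem_roots hf0,
      IsRoot.def, hevalf x]
  have hfinsetcard : f.roots.toFinset.card = 2 ^ (2 * h + 2) := by
    rw [Multiset.toFinset_card_of_nodup hnodup, hcardroots]
  have part3 : Nat.card {x : GaloisField 2 (2 * (2 * h + 1)) | Rtilde x = 0}
      = 2 ^ (2 * h + 2) := by
    rw [Nat.card_coe_set_eq, hsetfin, Set.ncard_coe_finset, hfinsetcard]
  refine ⟨part1, part2, part3, ?_⟩
  intro k hk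
  constructor
  · intro hall
    have hd : 0 < Nat.gcd k (2 * (2 * h + 1)) := Nat.gcd_pos_of_pos_left _ hk
    have hcd : ∀ x : GaloisField 2 (2 * (2 * h + 1)), Rtilde x = 0 →
        x ^ 2 ^ Nat.gcd k (2 * (2 * h + 1)) = x := by
      intro x hx
      refine pow_two_pow_gcd' x k _ (hall x hx) ?_
      have := FiniteField.pow_card x
      rwa [hcard] at this
    have hg2ne : (X ^ 2 ^ Nat.gcd k (2 * (2 * h + 1)) - X :
        (GaloisField 2 (2 * (2 * h + 1)))[X]) ≠ 0 :=
      FiniteField.X_pow_card_sub_X_ne_zero _ (Nat.one_lt_two_pow (by omega))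
    have hsub : f.roots.toFinset ⊆ (X ^ 2 ^ Nat.gcd k (2 * (2 * h + 1)) - X :
        (GaloisField 2 (2 * (2 * h + 1)))[X]).roots.toFinset := by
      intro x hx
      rw [Multiset.mem_toFinset, mem_roots hf0] at hx
      rw [Multiset.mem_toFinset, mem_roots hg2ne]
      have hx0 : Rtilde x = 0 := by rw [← hevalf x]; exact hx
      rw [IsRoot.def, eval_sub, eval_pow, eval_X, hcd x hx0, sub_self]
    have hle : 2 ^ (2 * h + 2) ≤ 2 ^ Nat.gcd k (2 * (2 * h + 1)) := by
      calc 2 ^ (2 * h + 2) = f.roots.toFinset.card := hfinsetcard.symm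
        _ ≤ (X ^ 2 ^ Nat.gcd k (2 * (2 * h + 1)) - X :
            (GaloisField 2 (2 * (2 * h + 1)))[X]).roots.toFinset.card :=
          Finset.card_le_card hsub
        _ ≤ Multiset.card (X ^ 2 ^ Nat.gcd k (2 * (2 * h + 1)) - X :
            (GaloisField 2 (2 * (2 * h + 1)))[X]).roots := Multiset.toFinset_card_le _
        _ ≤ _ := (card_roots' _).trans (le_of_eq
            (FiniteField.X_pow_card_sub_X_natDegree_eq _ (Nat.one_lt_two_pow (by omega))))
    have hdle : 2 * h + 2 ≤ Nat.gcd k (2 * (2 * h + 1)) :=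
      (Nat.pow_le_pow_iff_right (by norm_num)).mp hle
    obtain ⟨c, hc⟩ := Nat.gcd_dvd_right k (2 * (2 * h + 1))
    have hdeq : Nat.gcd k (2 * (2 * h + 1)) = 2 * (2 * h + 1) := by
      rcases Nat.lt_or_ge c 2 with hc2 | hc2
      · interval_cases c <;> omega
      · exfalso
        have h2d : Nat.gcd k (2 * (2 * h + 1)) * 2 ≤ Nat.gcd k (2 * (2 * h + 1)) * c :=
          Nat.mul_le_mul_left _ hc2
        omega
    exact hdeq ▸ Nat.gcd_dvd_left k (2 * (2 * h + 1))
  · rintro ⟨m, rfl⟩ x hx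
    have e : 2 ^ (2 * (2 * h + 1) * m) = Fintype.card (GaloisField 2 (2 * (2 * h + 1))) ^ m := by
      rw [hcard, pow_mul]
    rw [e]
    exact FiniteField.pow_card_pow m x
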